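/- Let V be a virtually cyclic group. Then there exists an element v₀ ∈ V such that for every element v ∈ V of infinite order there exist nonzero integers p₀, p with v₀^{p₀} = v^p and p dividing p₀. -/

import Mathlib

def IsVirtuallyCyclic (G : Type*) [Group G] : Prop :=
  ∃ H : Subgroup G, IsCyclic H ∧ H.FiniteIndex

theorem stmt_1 {V : Type*} [Group V] (hV : IsVirtuallyCyclic V) :
    ∃ v₀ : V, ∀ v : V, ¬ IsOfFinOrder v →
      ∃ p₀ p : ℤ, p₀ ≠ 0 ∧ p ≠ 0 ∧ v₀ ^ p₀ = v ^ p ∧ p ∣ p₀ := by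
  classical
  obtain ⟨H, hHc, hHf⟩ := hV
  haveI := hHc
  haveI := hHf
  set K := H.normalCore with hK
  haveI : K.FiniteIndex := Subgroup.finiteIndex_normalCore H
  haveI : IsCyclic K := Subgroup.isCyclic_of_le H.normalCore_le
  set N := K.index with hNdef
  have hN : N ≠ 0 := Subgroup.FiniteIndex.index_ne_zero
  obtain ⟨γ, hγ⟩ := IsCyclic.exists_generator (α := K)
  set g : V := (γ : V) with hgdef
  have hKg : ∀ x ∈ K, ∃ m : ℤ, x = g ^ m := by
    intro x hx
    obtain ⟨m, hm⟩ := hγ ⟨x, hx⟩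
    refine ⟨m, ?_⟩
    have := congrArg (fun y : K => (y : V)) hm
    simpa using this.symm
  have hpow : ∀ v : V, v ^ N ∈ K := fun v => Subgroup.pow_index_mem K v
  by_cases hg : IsOfFinOrder g
  · refine ⟨1, fun v hv => absurd ?_ hv⟩
    obtain ⟨m, hm⟩ := hKg _ (hpow v)
    have h1 : IsOfFinOrder (v ^ N) := hm ▸ hg.zpow
    obtain ⟨k, hk, hk1⟩ := isOfFinOrder_iff_pow_eq_one.1 h1
    refine isOfFinOrder_iff_pow_eq_one.2 ⟨N * k, Nat.mul_pos (Nat.pos_of_ne_zero hN) hk, ?_⟩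
    rw [pow_mul, hk1]
  · -- g has infinite order
    have hinj : ∀ {m n : ℤ}, g ^ m = g ^ n → m = n := fun h =>
      injective_zpow_iff_not_isOfFinOrder.2 hg h
    -- every infinite-order element commutes with g
    have hcomm : ∀ v : V, ¬ IsOfFinOrder v → Commute v g := by
      intro v hv
      obtain ⟨s, hs⟩ := hKg (v * g * v⁻¹)
        ((Subgroup.normalCore_normal H).conj_mem g γ.2 v)
      obtain ⟨s', hs'⟩ := hKg (v⁻¹ * g * v)
        (by simpa using (Subgroup.normalCore_normal H).conj_mem g γ.2 v⁻¹)
      have key : g = g ^ (s' * s) := by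
        have h2 : (v⁻¹ * g * v) ^ s = v⁻¹ * g ^ s * v := by
          simpa using conj_zpow (a := v⁻¹) (b := g) (i := s)
        calc g = v⁻¹ * (v * g * v⁻¹) * v := by group
          _ = v⁻¹ * g ^ s * v := by rw [hs]
          _ = (v⁻¹ * g * v) ^ s := h2.symm
          _ = (g ^ s') ^ s := by rw [hs']
          _ = g ^ (s' * s) := by rw [← zpow_mul]
      have hs1 : s' * s = 1 := by
        have h3 : g ^ (1 : ℤ) = g ^ (s' * s) := by rw [zpow_one]; exact key
        exact (hinj h3).symm
      have hsor : s = 1 ∨ s = -1 := by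
        rcases Int.isUnit_iff.1 (IsUnit.of_mul_eq_one_right s' hs1) with h | h
        · exact Or.inl h
        · exact Or.inr h
      rcases hsor with rfl | rfl
      · have h0 : v * g * v⁻¹ = g := by simpa using hs
        have hvg : v * g = g * v := by
          have h3 := congrArg (· * v) h0
          simpa [mul_assoc] using h3
        exact hvg
      · exfalso
        obtain ⟨m, hm⟩ := hKg _ (hpow v)
        have h1 : v * g ^ m * v⁻¹ = g ^ (-m) := by
          rw [← conj_zpow, hs, ← zpow_mul]
          norm_num
        have h2 : v * g ^ m * v⁻¹ = g ^ m := by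
          have hc : v * v ^ N = v ^ N * v := ((Commute.refl v).pow_right N).eq
          rw [← hm, hc]
          group
        have hm0 : m = 0 := by
          have := hinj (h2.symm.trans h1)
          omega
        rw [hm0] at hm
        simp only [zpow_zero] at hm
        exact hv (isOfFinOrder_iff_pow_eq_one.2 ⟨N, Nat.pos_of_ne_zero hN, hm⟩)
    -- the centralizer of g
    set C := Subgroup.centralizer ({g} : Set V) with hCdef
    have hgC : g ∈ C := Subgroup.mem_centralizer_iff.2 (by rintro h rfl; rfl)
    have hKzp : K ≤ Subgroup.zpowers g := by
      intro x hx
      obtain ⟨m, hm⟩ := hKg x hx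
      exact ⟨m, hm.symm⟩
    haveI : (Subgroup.zpowers g).FiniteIndex := Subgroup.finiteIndex_of_le hKzp
    haveI : ((Subgroup.zpowers g).subgroupOf C).FiniteIndex :=
      Subgroup.instFiniteIndex_subgroupOf _ _
    have hle : (Subgroup.zpowers g).subgroupOf C ≤ Subgroup.center C := by
      rintro ⟨c, hc⟩ hmem
      obtain ⟨k, hk⟩ := hmem
      rw [Subgroup.mem_center_iff]
      rintro ⟨d, hd⟩
      have hdg : Commute d g := (Subgroup.mem_centralizer_iff.1 hd g rfl : g * d = d * g).symm
      have : d * c = c * d := by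
        have : c = g ^ k := by simpa using hk.symm
        rw [this]
        exact (hdg.zpow_right k).eq
      exact Subtype.ext this
    haveI : (Subgroup.center C).FiniteIndex := Subgroup.finiteIndex_of_le hle
    set M := (Subgroup.center C).index with hMdef
    have hM : M ≠ 0 := Subgroup.FiniteIndex.index_ne_zero
    -- transfer: c ↦ c ^ M is a homomorphism C →* C
    set f : C →* C := (Subgroup.center C).subtype.comp (MonoidHom.transferCenterPow ↥C)
      with hfdef
    have hf : ∀ c : C, f c = c ^ M := fun c => MonoidHom.transferCenterPow_apply c
    have hfc : ∀ c d : C, Commute (f c) (f d) := by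
      intro c d
      have h1 : ((MonoidHom.transferCenterPow ↥C c : ↥C)) ∈ Subgroup.center C :=
        (MonoidHom.transferCenterPow ↥C c).2
      exact (Subgroup.mem_center_iff.1 h1 (f d)).symm
    -- the exponent function
    have hex : ∀ c : C, ∃ m : ℤ, ((c : V)) ^ (M * N) = g ^ m := by
      intro c
      obtain ⟨m, hm⟩ := hKg _ (hpow (c : V))
      refine ⟨m * M, ?_⟩
      rw [mul_comm M N, pow_mul, hm, ← zpow_natCast (g ^ m) M, ← zpow_mul]
    choose e he using hex
    have hadd : ∀ c d : C, e (c * d) = e c + e d := by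
      intro c d
      apply hinj
      show g ^ e (c * d) = g ^ (e c + e d)
      rw [zpow_add, ← he (c * d), ← he c, ← he d]
      have key : (c * d) ^ (M * N) = c ^ (M * N) * d ^ (M * N) := by
        rw [pow_mul, pow_mul, pow_mul, ← hf c, ← hf d, ← hf (c * d), map_mul,
          (hfc c d).mul_pow]
      have := congrArg (fun y : C => (y : V)) key
      simpa using this
    -- range of e is a subgroup of ℤ
    have he1 : e 1 = 0 := by
      have := hadd 1 1
      simp only [mul_one] at this
      omega
    have heinv : ∀ c : C, e c⁻¹ = -e c := by
      intro c
      have := hadd c⁻¹ c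
      rw [inv_mul_cancel, he1] at this
      omega
    set S : AddSubgroup ℤ :=
      { carrier := Set.range e
        add_mem' := by
          rintro _ _ ⟨c, rfl⟩ ⟨d, rfl⟩
          exact ⟨c * d, hadd c d⟩
        zero_mem' := ⟨1, he1⟩
        neg_mem' := by
          rintro _ ⟨c, rfl⟩
          exact ⟨c⁻¹, heinv c⟩ } with hSdef
    obtain ⟨a, hS⟩ := Int.subgroup_cyclic S
    have hmemS : ∀ x : ℤ, x ∈ S ↔ ∃ t : ℤ, x = t * a := by
      intro x
      rw [hS, AddSubgroup.mem_closure_singleton]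
      constructor
      · rintro ⟨n, hn⟩; exact ⟨n, by rw [← hn, smul_eq_mul]⟩
      · rintro ⟨t, ht⟩; exact ⟨t, by rw [ht, smul_eq_mul]⟩
    have hgCe : e ⟨g, hgC⟩ = (M * N : ℕ) := by
      apply hinj
      show g ^ e ⟨g, hgC⟩ = g ^ ((M * N : ℕ) : ℤ)
      rw [← he ⟨g, hgC⟩, zpow_natCast]
    have hMN : ((M * N : ℕ) : ℤ) ≠ 0 := by
      simp only [ne_eq, Nat.cast_eq_zero, mul_eq_zero]
      push_neg
      exact ⟨hM, hN⟩
    have ha0 : a ≠ 0 := by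
      rintro rfl
      obtain ⟨t, ht⟩ := (hmemS ((M * N : ℕ) : ℤ)).1 ⟨⟨g, hgC⟩, hgCe⟩
      simp only [mul_zero] at ht
      exact hMN ht
    have haS : a ∈ S := by
      rw [hS]
      exact AddSubgroup.mem_closure_singleton.2 ⟨1, one_smul _ _⟩
    obtain ⟨c₀, hc₀⟩ : ∃ c₀ : C, e c₀ = a := haS
    refine ⟨(c₀ : V), ?_⟩
    intro v hv
    have hvC : v ∈ C :=
      Subgroup.mem_centralizer_iff.2 (by rintro h rfl; exact (hcomm v hv).eq.symm)
    obtain ⟨t, ht⟩ := (hmemS (e ⟨v, hvC⟩)).1 ⟨⟨v, hvC⟩, rfl⟩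
    have ht0 : t ≠ 0 := by
      rintro rfl
      simp only [zero_mul] at ht
      have : v ^ (M * N) = 1 := by
        have := he ⟨v, hvC⟩
        rw [ht] at this
        simpa using this
      exact hv (isOfFinOrder_iff_pow_eq_one.2
        ⟨M * N, Nat.pos_of_ne_zero (by positivity), this⟩)
    refine ⟨((M * N : ℕ) : ℤ) * t, ((M * N : ℕ) : ℤ), mul_ne_zero hMN ht0, hMN, ?_,
      ⟨t, rfl⟩⟩
    have hc₀pow : (c₀ : V) ^ (M * N) = g ^ a := by rw [← hc₀]; exact he c₀
    have hvpow : v ^ (M * N) = g ^ (t * a) := by rw [← ht]; exact he ⟨v, hvC⟩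
    calc (c₀ : V) ^ (((M * N : ℕ) : ℤ) * t)
        = ((c₀ : V) ^ ((M * N : ℕ) : ℤ)) ^ t := by rw [zpow_mul]
      _ = ((c₀ : V) ^ (M * N : ℕ)) ^ t := by rw [zpow_natCast]
      _ = (g ^ a) ^ t := by rw [hc₀pow]
      _ = g ^ (t * a) := by rw [← zpow_mul, mul_comm]
      _ = v ^ (M * N : ℕ) := hvpow.symm
      _ = v ^ ((M * N : ℕ) : ℤ) := by rw [zpow_natCast]
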